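/- No-cloning theorem: Let N ≥ 2. There do not exist a unitary matrix U ∈ ℂ^{(N·N)×(N·N)}, with rows and columns indexed by pairs (i,j) ∈ [N]×[N], and a unit vector s ∈ ℂ^N such that U·(x ⊗ s) = x ⊗ x for every unit vector x ∈ ℂ^N, where (x ⊗ y)_{(i,j)} = x_i·y_j. -/

import Mathlib

open scoped InnerProductSpace ComplexConjugate

/-- The tensor (Kronecker) product of two vectors in `ℂ^N`, as a vector in
`ℂ^{N·N}` indexed by pairs: `(x ⊗ y)_{(i,j)} = x_i·y_j`. -/
noncomputable def tensorVec {N : ℕ} (x y : EuclideanSpace ℂ (Fin N)) :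
    EuclideanSpace ℂ (Fin N × Fin N) :=
  (WithLp.equiv 2 (Fin N × Fin N → ℂ)).symm fun p => x p.1 * y p.2

lemma inner_tensorVec {N : ℕ} (a b c d : EuclideanSpace ℂ (Fin N)) :
    ⟪tensorVec a b, tensorVec c d⟫_ℂ = ⟪a, c⟫_ℂ * ⟪b, d⟫_ℂ := by
  simp only [tensorVec, PiLp.inner_apply, RCLike.inner_apply, WithLp.equiv_symm_apply, PiLp.toLp_apply,
    map_mul, Fintype.sum_prod_type, ← Finset.sum_mul, ← Finset.mul_sum]
  rw [Finset.sum_mul_sum Finset.univ Finset.univ (fun i => c i * (starRingEnd ℂ) (a i))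
    (fun j => d j * (starRingEnd ℂ) (b j))]
  exact Finset.sum_congr rfl fun i _ => Finset.sum_congr rfl fun j _ => by ring

lemma unitary_inner {N : ℕ} (U : Matrix (Fin N × Fin N) (Fin N × Fin N) ℂ)
    (hU : U ∈ Matrix.unitaryGroup (Fin N × Fin N) ℂ)
    (v w : EuclideanSpace ℂ (Fin N × Fin N)) :
    ⟪Matrix.toEuclideanLin U v, Matrix.toEuclideanLin U w⟫_ℂ = ⟪v, w⟫_ℂ := by
  rw [← LinearMap.adjoint_inner_right, ← Matrix.toEuclideanLin_conjTranspose_eq_adjoint]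
  simp only [Matrix.toEuclideanLin_apply, Equiv.apply_symm_apply, Matrix.mulVec_mulVec]
  have h1 : U.conjTranspose * U = 1 := hU.1
  rw [h1]
  simp

/-- **No-cloning theorem.** For `N ≥ 2` there is no unitary matrix
`U ∈ ℂ^{(N·N)×(N·N)}` and unit vector `s ∈ ℂ^N` such that `U·(x ⊗ s) = x ⊗ x`
for every unit vector `x ∈ ℂ^N`. -/
theorem no_cloning (N : ℕ) (hN : 2 ≤ N) :
    ¬ ∃ (U : Matrix (Fin N × Fin N) (Fin N × Fin N) ℂ)
        (s : EuclideanSpace ℂ (Fin N)),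
      U ∈ Matrix.unitaryGroup (Fin N × Fin N) ℂ ∧ ‖s‖ = 1 ∧
      ∀ x : EuclideanSpace ℂ (Fin N), ‖x‖ = 1 →
        Matrix.toEuclideanLin U (tensorVec x s) = tensorVec x x := by
  rintro ⟨U, s, hU, hs, hclone⟩
  set i0 : Fin N := ⟨0, by omega⟩
  set i1 : Fin N := ⟨1, by omega⟩
  have hne : i0 ≠ i1 := by simp [i0, i1, Fin.ext_iff]
  set e0 : EuclideanSpace ℂ (Fin N) := EuclideanSpace.single i0 1
  set e1 : EuclideanSpace ℂ (Fin N) := EuclideanSpace.single i1 1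
  have he0 : ‖e0‖ = 1 := by simp [e0, EuclideanSpace.norm_single]
  have he1 : ‖e1‖ = 1 := by simp [e1, EuclideanSpace.norm_single]
  have hinner01 : ⟪e0, e1⟫_ℂ = 0 := by
    simp [e0, e1, EuclideanSpace.inner_single_left, EuclideanSpace.single_apply, hne, hne.symm]
  set c : ℂ := (Real.sqrt 2 : ℂ)⁻¹
  set x : EuclideanSpace ℂ (Fin N) := c • (e0 + e1)
  have hsum : ‖e0 + e1‖ = Real.sqrt 2 := by
    have h := @norm_add_sq ℂ _ _ _ _ e0 e1
    rw [hinner01, he0, he1] at h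
    simp at h
    rw [← Real.sqrt_sq (norm_nonneg (e0 + e1)), h]
    norm_num
  have hx : ‖x‖ = 1 := by
    rw [norm_smul, hsum]
    simp [c]
    rw [abs_of_nonneg (by positivity)]
    rw [inv_mul_cancel₀ (by positivity)]
  have hix : ⟪e0, x⟫_ℂ = c := by
    simp [x, inner_smul_right, inner_add_right, hinner01, e0,
      EuclideanSpace.inner_single_left, EuclideanSpace.inner_single_right]
  have key : ⟪tensorVec e0 s, tensorVec x s⟫_ℂ = ⟪tensorVec e0 e0, tensorVec x x⟫_ℂ := by
    rw [← hclone e0 he0, ← hclone x hx, unitary_inner U hU]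
  rw [inner_tensorVec, inner_tensorVec, hix, inner_self_eq_norm_sq_to_K, hs] at key
  -- key : c * 1^2 = c * c
  have hs2 : Real.sqrt 2 ≠ 0 := by positivity
  have hc0 : c ≠ 0 := by
    simp [c, Complex.ofReal_ne_zero, hs2]
  have hc1 : c = 1 := by
    push_cast at key
    have h3 : c * 1 = c * c := by rw [← key]; ring
    exact (mul_left_cancel₀ hc0 h3).symm
  have h1 : ((Real.sqrt 2 : ℝ) : ℂ) = 1 := by
    rw [← inv_inv ((Real.sqrt 2 : ℝ) : ℂ)]
    rw [show ((Real.sqrt 2 : ℝ) : ℂ)⁻¹ = c from rfl, hc1, inv_one]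
  have h2 : Real.sqrt 2 = 1 := by exact_mod_cast h1
  nlinarith [Real.sq_sqrt (by norm_num : (0:ℝ) ≤ 2), h2]
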